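/- (Quadratic minoration of the population divergence, eq. (A13).) Let κ₀ > 0 and assume the functional logistic model with assumptions (A4), (A5), where additionally H : ℝ → (0,1) is a continuously differentiable, strictly increasing bijection with H' > 0 everywhere and sup_x H'(x) ≤ c₀ < ∞. Then there exist δ > 0, η > 0, L > 0 and n₀ such that for all n ≥ n₀, all β ∈ B([0,1]) with ‖β − β₀‖_∞ < δ, and all κ with |κ − κ₀| < δ: M(β, κ) − M(β̃_{K_n}, κ) ≥ η |π(β, β̃_{K_n})|² − L ‖β̃_{K_n} − β₀‖_{L²} π(β, β̃_{K_n}). -/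

import Mathlib

open MeasureTheory Filter Topology Real
open scoped ENNReal BigOperators RealInnerProductSpace

noncomputable section

/-- `L²([0,1])`. -/
abbrev L2 : Type := MeasureTheory.Lp ℝ 2 (MeasureTheory.volume.restrict (Set.Icc (0 : ℝ) 1))

/-- The Bernoulli density with success probability `p`. -/
def bern (p : ℝ) (y : Bool) : ℝ := if y then p else 1 - p

/-- The density power divergence between Bernoulli densities. -/
def dpd (κ p q : ℝ) : ℝ :=
  ∑ y : Bool, (bern q y ^ (1 + κ) - (1 + 1 / κ) * bern p y * bern q y ^ κ
    + (1 / κ) * bern p y ^ (1 + κ))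

/-- The population divergence criterion `M(β, κ) = 𝔼[d_κ(f_{p(β₀)}, f_{p(β)})]`. -/
def Mpop {Ω : Type*} [MeasurableSpace Ω] (P : Measure Ω) (H : ℝ → ℝ) (X : Ω → L2)
    (β₀ β : L2) (κ : ℝ) : ℝ :=
  ∫ ω, dpd κ (H ⟪X ω, β₀⟫) (H ⟪X ω, β⟫) ∂P

/-- The prediction error `π(β₁, β₂) = (𝔼|⟨X, β₁ − β₂⟩|²)^{1/2}`. -/
def predErr {Ω : Type*} [MeasurableSpace Ω] (P : Measure Ω) (X : Ω → L2) (g₁ g₂ : L2) : ℝ :=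
  Real.sqrt (∫ ω, (⟪X ω, g₁ - g₂⟫ : ℝ) ^ 2 ∂P)

open intervalIntegral in
lemma intId {a b : ℝ} : ∫ x in a..b, x = (b ^ 2 - a ^ 2) / 2 := integral_id

lemma dpd_eq (κ p q : ℝ) : dpd κ p q =
    (q ^ (1+κ) - (1+1/κ)*p*q^κ + (1/κ)*p^(1+κ))
    + ((1-q) ^ (1+κ) - (1+1/κ)*(1-p)*(1-q)^κ + (1/κ)*(1-p)^(1+κ)) := by
  simp [dpd, bern, Fintype.sum_bool]

lemma rpow_bddd {a x e E : ℝ} (ha : 0 < a) (hx : a ≤ x) (hx1 : x ≤ 1)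
    (he : -1 ≤ e) (heE : e ≤ E) (hE : 0 ≤ E) :
    a ^ E ≤ x ^ e ∧ x ^ e ≤ a ^ (-1 : ℝ) := by
  have hx0 : 0 < x := lt_of_lt_of_le ha hx
  constructor
  · calc a ^ E ≤ x ^ E := Real.rpow_le_rpow ha.le hx hE
      _ ≤ x ^ e := Real.rpow_le_rpow_of_exponent_ge hx0 hx1 heE
  · calc x ^ e ≤ x ^ (-1:ℝ) := Real.rpow_le_rpow_of_exponent_ge hx0 hx1 he
      _ ≤ a ^ (-1:ℝ) := by
        rw [Real.rpow_neg_one, Real.rpow_neg_one]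
        exact inv_anti₀ ha hx

lemma dpd_abs_le {κ p q : ℝ} (hκ : 0 < κ) (hp : p ∈ Set.Icc (0:ℝ) 1)
    (hq : q ∈ Set.Icc (0:ℝ) 1) : |dpd κ p q| ≤ 4 + 4/κ := by
  have h1p : (1:ℝ) - p ∈ Set.Icc (0:ℝ) 1 := ⟨by linarith [hp.2], by linarith [hp.1]⟩
  have h1q : (1:ℝ) - q ∈ Set.Icc (0:ℝ) 1 := ⟨by linarith [hq.2], by linarith [hq.1]⟩
  have hb : ∀ x : ℝ, x ∈ Set.Icc (0:ℝ) 1 → ∀ c : ℝ, 0 ≤ c → x ^ c ∈ Set.Icc (0:ℝ) 1 :=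
    fun x hx c hc => ⟨Real.rpow_nonneg hx.1 c, Real.rpow_le_one hx.1 hx.2 hc⟩
  have hκ1 : (0:ℝ) ≤ 1 + κ := by linarith
  have B1 := hb q hq (1+κ) hκ1
  have B2 := hb q hq κ hκ.le
  have B3 := hb p hp (1+κ) hκ1
  have B4 := hb (1-q) h1q (1+κ) hκ1
  have B5 := hb (1-q) h1q κ hκ.le
  have B6 := hb (1-p) h1p (1+κ) hκ1
  have hiκ : 0 < 1/κ := by positivity
  have m1 : 0 ≤ p * q^κ ∧ p * q^κ ≤ 1 :=
    ⟨mul_nonneg hp.1 B2.1, mul_le_one₀ hp.2 B2.1 B2.2⟩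
  have m2 : 0 ≤ (1-p) * (1-q)^κ ∧ (1-p) * (1-q)^κ ≤ 1 :=
    ⟨mul_nonneg h1p.1 B5.1, mul_le_one₀ h1p.2 B5.1 B5.2⟩
  have e1 : (1+1/κ) * p * q^κ ≤ 1+1/κ := by rw [mul_assoc]; nlinarith [m1.2]
  have e2 : (1+1/κ) * (1-p) * (1-q)^κ ≤ 1+1/κ := by rw [mul_assoc]; nlinarith [m2.2]
  have e3 : 0 ≤ (1+1/κ) * p * q^κ := by rw [mul_assoc]; exact mul_nonneg (by positivity) m1.1
  have e4 : 0 ≤ (1+1/κ) * (1-p) * (1-q)^κ := by rw [mul_assoc]; exact mul_nonneg (by positivity) m2.1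
  have e5 : 1/κ * p^(1+κ) ≤ 1/κ := by nlinarith [B3.2]
  have e6 : 0 ≤ 1/κ * p^(1+κ) := mul_nonneg hiκ.le B3.1
  have e7 : 1/κ * (1-p)^(1+κ) ≤ 1/κ := by nlinarith [B6.2]
  have e8 : 0 ≤ 1/κ * (1-p)^(1+κ) := mul_nonneg hiκ.le B6.1
  rw [dpd_eq, abs_le]
  have h4 : (4:ℝ)/κ = 4*(1/κ) := by ring
  rw [h4]
  constructor <;> linarith [B1.1, B1.2, B4.1, B4.2]

lemma hasDerivAt_dpd (κ p : ℝ) (hκ : 0 < κ) {q : ℝ} (h0 : 0 < q) (h1 : q < 1) :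
    HasDerivAt (fun q => dpd κ p q)
      ((1+κ) * (q - p) * (q ^ (κ-1) + (1-q) ^ (κ-1))) q := by
  have h1q : (0:ℝ) < 1 - q := by linarith
  have dA : HasDerivAt (fun q : ℝ => q ^ (1+κ)) ((1+κ) * q ^ (1+κ-1)) q :=
    Real.hasDerivAt_rpow_const (Or.inl h0.ne')
  have dB : HasDerivAt (fun q : ℝ => q ^ κ) (κ * q ^ (κ-1)) q :=
    Real.hasDerivAt_rpow_const (Or.inl h0.ne')
  have dq : HasDerivAt (fun q : ℝ => 1 - q) (-1) q := by
    simpa using (hasDerivAt_id q).const_sub 1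
  have dD : HasDerivAt (fun q : ℝ => (1-q) ^ (1+κ)) (-1 * (1+κ) * (1-q) ^ (1+κ-1)) q :=
    dq.rpow_const (Or.inl h1q.ne')
  have dE : HasDerivAt (fun q : ℝ => (1-q) ^ κ) (-1 * κ * (1-q) ^ (κ-1)) q :=
    dq.rpow_const (Or.inl h1q.ne')
  have big := (((dA.sub (dB.const_mul ((1+1/κ)*p))).add_const ((1/κ)*p^(1+κ))).add
    ((dD.sub (dE.const_mul ((1+1/κ)*(1-p)))).add_const ((1/κ)*(1-p)^(1+κ))))
  have hfun : (fun q => dpd κ p q) = (fun q : ℝ =>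
      (q ^ (1+κ) - (1+1/κ)*p*q^κ + (1/κ)*p^(1+κ))
      + ((1-q) ^ (1+κ) - (1+1/κ)*(1-p)*(1-q)^κ + (1/κ)*(1-p)^(1+κ))) := by
    funext q; exact dpd_eq κ p q
  rw [hfun]
  refine HasDerivAt.congr_deriv big ?_
  have eq1 : q ^ (1+κ-1) = q ^ (κ-1) * q := by
    rw [show (1+κ-1) = (κ-1) + 1 by ring, Real.rpow_add_one h0.ne']
  have eq2 : (1-q) ^ (1+κ-1) = (1-q) ^ (κ-1) * (1-q) := by
    rw [show (1+κ-1) = (κ-1) + 1 by ring, Real.rpow_add_one h1q.ne']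
  rw [eq1, eq2]
  field_simp
  ring

lemma dpd_key {κ p₀ p₁ p₂ a b m M : ℝ} (hκ : 0 < κ) (ha : 0 < a) (hb : b < 1)
    (hp₀ : p₀ ∈ Set.Icc a b) (hp₁ : p₁ ∈ Set.Icc a b) (hp₂ : p₂ ∈ Set.Icc a b)
    (hm0 : 0 ≤ m)
    (hg : ∀ q ∈ Set.Icc a b, m ≤ q^(κ-1) + (1-q)^(κ-1) ∧ q^(κ-1) + (1-q)^(κ-1) ≤ M) :
    dpd κ p₀ p₁ - dpd κ p₀ p₂ ≥ m/2*(p₁-p₂)^2 - (1+κ)*M*(|p₂-p₀| * |p₁-p₂|) := by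
  set g : ℝ → ℝ := fun q => q^(κ-1) + (1-q)^(κ-1) with hgdef
  set f' : ℝ → ℝ := fun q => (1+κ) * (q - p₀) * g q with hf'def
  have hab : a ≤ b := le_trans hp₀.1 hp₀.2
  have hgc : ContinuousOn f' (Set.Icc a b) := by
    intro q hq
    have hq0 : q ≠ 0 := ne_of_gt (lt_of_lt_of_le ha hq.1)
    have hq1 : (1:ℝ) - q ≠ 0 := ne_of_gt (by linarith [lt_of_le_of_lt hq.2 hb] : (0:ℝ) < 1 - q)
    have c1 : ContinuousAt (fun q : ℝ => q ^ (κ-1)) q :=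
      Real.continuousAt_rpow_const q _ (Or.inl hq0)
    have c2 : ContinuousAt (fun q : ℝ => (1-q) ^ (κ-1)) q := by
      have := (Real.continuousAt_rpow_const (1-q) (κ-1) (Or.inl hq1))
      exact this.comp ((continuous_const.sub continuous_id).continuousAt)
    exact (((continuousAt_const.mul (continuousAt_id.sub continuousAt_const))).mul
      (c1.add c2)).continuousWithinAt
  have hderiv : ∀ q ∈ Set.Icc a b, HasDerivAt (fun q => dpd κ p₀ q) (f' q) q := fun q hq =>
    hasDerivAt_dpd κ p₀ hκ (lt_of_lt_of_le ha hq.1) (lt_of_le_of_lt hq.2 hb)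
  have habs : ∀ q ∈ Set.Icc a b,
      -((1+κ)*M* |p₂-p₀|) ≤ (1+κ)*((p₂-p₀) * g q) ∧
      (1+κ)*((p₂-p₀) * g q) ≤ (1+κ)*M* |p₂-p₀| := by
    intro q hq
    obtain ⟨hgm, hgM⟩ := hg q hq
    have hgm' : m ≤ g q := hgm
    have hgM' : g q ≤ M := hgM
    have hgnn : 0 ≤ g q := hm0.trans hgm'
    have habs1 : |(p₂-p₀) * g q| ≤ |p₂-p₀| * M := by
      rw [abs_mul, abs_of_nonneg hgnn]
      exact mul_le_mul_of_nonneg_left hgM' (abs_nonneg _)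
    have h1κ : (0:ℝ) ≤ 1 + κ := by linarith
    constructor
    · nlinarith [neg_abs_le ((p₂-p₀) * g q)]
    · nlinarith [le_abs_self ((p₂-p₀) * g q)]
  have hglb : ∀ q ∈ Set.Icc a b, m ≤ (1+κ) * g q := by
    intro q hq
    have hgm' : m ≤ g q := (hg q hq).1
    have hgnn : 0 ≤ g q := hm0.trans hgm'
    nlinarith
  rcases le_total p₂ p₁ with h12 | h12
  · have hsub : Set.uIcc p₂ p₁ ⊆ Set.Icc a b := by
      rw [Set.uIcc_of_le h12]; exact Set.Icc_subset_Icc hp₂.1 hp₁.2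
    have hFTC : ∫ q in p₂..p₁, f' q = dpd κ p₀ p₁ - dpd κ p₀ p₂ :=
      intervalIntegral.integral_eq_sub_of_hasDerivAt (fun q hq => hderiv q (hsub hq))
        ((hgc.mono hsub).intervalIntegrable)
    have hcomp : ∀ q ∈ Set.Icc p₂ p₁, m*(q - p₂) - (1+κ)*M* |p₂-p₀| ≤ f' q := by
      intro q hq
      have hqab : q ∈ Set.Icc a b := hsub (by rw [Set.uIcc_of_le h12]; exact hq)
      have hx : 0 ≤ q - p₂ := sub_nonneg.2 hq.1
      have h1 : m*(q-p₂) ≤ (1+κ)*((q-p₂)*g q) := by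
        calc m*(q-p₂) ≤ ((1+κ)*g q)*(q-p₂) := mul_le_mul_of_nonneg_right (hglb q hqab) hx
          _ = (1+κ)*((q-p₂)*g q) := by ring
      have h2 := (habs q hqab).1
      have hexp : f' q = (1+κ)*((q-p₂) * g q) + (1+κ)*((p₂-p₀) * g q) := by
        rw [hf'def]; ring
      linarith
    have hi1 : IntervalIntegrable (fun q : ℝ => m*(q-p₂)) volume p₂ p₁ :=
      ((continuous_const.mul ((continuous_id').sub continuous_const)) :
        Continuous fun q : ℝ => m*(q-p₂)).intervalIntegrable _ _
    have hi2 : IntervalIntegrable (fun _ : ℝ => (1+κ)*M* |p₂-p₀|) volume p₂ p₁ :=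
      (continuous_const).intervalIntegrable _ _
    have hmono := intervalIntegral.integral_mono_on h12 (hi1.sub hi2)
      ((hgc.mono hsub).intervalIntegrable) hcomp
    have hI : (∫ q in p₂..p₁, (q - p₂)) = (p₁-p₂)^2/2 := by
      rw [show (fun q : ℝ => q - p₂) = (fun q : ℝ => (fun x : ℝ => x) (q - p₂)) from rfl,
        intervalIntegral.integral_comp_sub_right (fun x : ℝ => x) p₂,
        intId]
      ring_nf
    have hcalc : (∫ q in p₂..p₁, (m*(q - p₂) - (1+κ)*M* |p₂-p₀|))
        = m*((p₁-p₂)^2/2) - (1+κ)*M* |p₂-p₀| * (p₁-p₂) := by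
      rw [intervalIntegral.integral_sub hi1 hi2, intervalIntegral.integral_const,
        intervalIntegral.integral_const_mul, hI, smul_eq_mul]
      ring
    rw [hcalc, hFTC] at hmono
    have habs2 : |p₁ - p₂| = p₁ - p₂ := abs_of_nonneg (by linarith)
    rw [ge_iff_le, habs2]
    nlinarith
  · have hsub : Set.uIcc p₁ p₂ ⊆ Set.Icc a b := by
      rw [Set.uIcc_of_le h12]; exact Set.Icc_subset_Icc hp₁.1 hp₂.2
    have hFTC : ∫ q in p₁..p₂, f' q = dpd κ p₀ p₂ - dpd κ p₀ p₁ :=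
      intervalIntegral.integral_eq_sub_of_hasDerivAt (fun q hq => hderiv q (hsub hq))
        ((hgc.mono hsub).intervalIntegrable)
    have hcomp : ∀ q ∈ Set.Icc p₁ p₂, f' q ≤ m*(q - p₂) + (1+κ)*M* |p₂-p₀| := by
      intro q hq
      have hqab : q ∈ Set.Icc a b := hsub (by rw [Set.uIcc_of_le h12]; exact hq)
      have hx : q - p₂ ≤ 0 := sub_nonpos.2 hq.2
      have h1 : (1+κ)*((q-p₂)*g q) ≤ m*(q-p₂) := by
        calc (1+κ)*((q-p₂)*g q) = ((1+κ)*g q)*(q-p₂) := by ring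
          _ ≤ m*(q-p₂) := mul_le_mul_of_nonpos_right (hglb q hqab) hx
      have h2 := (habs q hqab).2
      have hexp : f' q = (1+κ)*((q-p₂) * g q) + (1+κ)*((p₂-p₀) * g q) := by
        rw [hf'def]; ring
      linarith
    have hi1 : IntervalIntegrable (fun q : ℝ => m*(q-p₂)) volume p₁ p₂ :=
      ((continuous_const.mul ((continuous_id').sub continuous_const)) :
        Continuous fun q : ℝ => m*(q-p₂)).intervalIntegrable _ _
    have hi2 : IntervalIntegrable (fun _ : ℝ => (1+κ)*M* |p₂-p₀|) volume p₁ p₂ :=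
      (continuous_const).intervalIntegrable _ _
    have hmono := intervalIntegral.integral_mono_on h12
      ((hgc.mono hsub).intervalIntegrable) (hi1.add hi2) hcomp
    have hI : (∫ q in p₁..p₂, (q - p₂)) = -((p₁-p₂)^2/2) := by
      rw [show (fun q : ℝ => q - p₂) = (fun q : ℝ => (fun x : ℝ => x) (q - p₂)) from rfl,
        intervalIntegral.integral_comp_sub_right (fun x : ℝ => x) p₂,
        intId]
      ring_nf
    have hcalc : (∫ q in p₁..p₂, (m*(q - p₂) + (1+κ)*M* |p₂-p₀|))
        = m*(-((p₁-p₂)^2/2)) + (1+κ)*M* |p₂-p₀| * (p₂-p₁) := by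
      rw [intervalIntegral.integral_add hi1 hi2, intervalIntegral.integral_const,
        intervalIntegral.integral_const_mul, hI, smul_eq_mul]
      ring
    rw [hcalc, hFTC] at hmono
    have habs2 : |p₁ - p₂| = p₂ - p₁ := by rw [abs_sub_comm]; exact abs_of_nonneg (by linarith)
    rw [ge_iff_le, habs2]
    nlinarith

lemma int_abs_le_sqrt {Ω : Type*} [MeasurableSpace Ω] (P : MeasureTheory.Measure Ω)
    [MeasureTheory.IsProbabilityMeasure P] {u : Ω → ℝ}
    (h1 : MeasureTheory.Integrable u P)
    (h2 : MeasureTheory.Integrable (fun ω => (u ω)^2) P) :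
    ∫ ω, |u ω| ∂P ≤ Real.sqrt (∫ ω, (u ω)^2 ∂P) := by
  set I2 := ∫ ω, (u ω)^2 ∂P with hI2def
  have hI2 : 0 ≤ I2 := integral_nonneg (fun ω => sq_nonneg _)
  have key : ∀ t : ℝ, 0 < t → ∫ ω, |u ω| ∂P ≤ (I2 + t^2)/(2*t) := by
    intro t ht
    have hpt : ∀ ω, |u ω| ≤ ((u ω)^2 + t^2)/(2*t) := by
      intro ω
      rw [le_div_iff₀ (by positivity)]
      nlinarith [sq_nonneg (|u ω| - t), sq_abs (u ω)]
    calc ∫ ω, |u ω| ∂P ≤ ∫ ω, ((u ω)^2 + t^2)/(2*t) ∂P :=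
          integral_mono h1.abs ((h2.add (integrable_const _)).div_const _) hpt
      _ = (I2 + t^2)/(2*t) := by
          rw [integral_div, integral_add h2 (integrable_const _), integral_const]
          simp [measure_univ, hI2def]
  rcases eq_or_lt_of_le (Real.sqrt_nonneg I2) with hs | hs
  · have hI20 : I2 = 0 := le_antisymm (Real.sqrt_eq_zero'.1 hs.symm) hI2
    rw [← hs]
    have : ∀ ε : ℝ, 0 < ε → ∫ ω, |u ω| ∂P ≤ 0 + ε := by
      intro ε hε
      have := key ε hε
      rw [hI20] at this
      calc ∫ ω, |u ω| ∂P ≤ (0 + ε^2)/(2*ε) := this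
        _ = ε/2 := by field_simp; ring
        _ ≤ 0 + ε := by linarith
    exact le_of_forall_pos_le_add this
  · have := key (Real.sqrt I2) hs
    rwa [Real.sq_sqrt hI2, show (I2 + I2)/(2*Real.sqrt I2) = I2/Real.sqrt I2 by ring,
      Real.div_sqrt] at this


set_option maxHeartbeats 2000000

/-- quadratic minoration of the population divergence, eq. (A13): under
(A4), (A5) and the strengthened smoothness assumptions on the link `H`, there exist
`δ, η, L > 0` and `n₀` such that for all `n ≥ n₀`, all `β` with `‖β − β₀‖_∞ < δ` and all
`κ` with `|κ − κ₀| < δ`,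
`M(β,κ) − M(β̃_{K_n},κ) ≥ η π(β, β̃_{K_n})² − L ‖β̃_{K_n} − β₀‖ π(β, β̃_{K_n})`. -/
theorem quadratic_minoration
    {Ω : Type*} [MeasurableSpace Ω] (P : Measure Ω) [IsProbabilityMeasure P]
    [MeasurableSpace L2] [BorelSpace L2]
    -- the Banach space `B([0,1])` of (A3), used in (A4)
    {B : Type*} [NormedAddCommGroup B] [NormedSpace ℝ B] [CompleteSpace B]
    (ιC : B →ₗ[ℝ] C(Set.Icc (0 : ℝ) 1, ℝ)) (hιCinj : Function.Injective ιC)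
    (c₁ : ℝ) (hc₁ : 0 < c₁) (hembB : ∀ f : B, ‖ιC f‖ ≤ c₁ * ‖f‖)
    (ιL : B →ₗ[ℝ] L2)
    (hιL : ∀ f : B, ∀ᵐ t ∂(MeasureTheory.volume.restrict (Set.Icc (0 : ℝ) 1)),
      ∀ ht : t ∈ Set.Icc (0 : ℝ) 1, (ιL f : ℝ → ℝ) t = ιC f ⟨t, ht⟩)
    -- the link function: continuously differentiable, strictly increasing bijection
    -- onto (0,1) with H' > 0 everywhere and sup H' ≤ c₀ < ∞
    (H : ℝ → ℝ) (hHsmooth : ContDiff ℝ 1 H) (hHderivpos : ∀ x, 0 < deriv H x)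
    (hHrange : Set.range H = Set.Ioo (0 : ℝ) 1) (hHmono : StrictMono H)
    (c₀ : ℝ) (hc₀ : ∀ x, deriv H x ≤ c₀)
    -- the predictor and the true coefficient function
    (X : Ω → L2) (hX : Measurable X) (β₀ : B)
    -- (A4): approximating subspaces and approximants
    (K : ℕ → ℕ) (Θ : ℕ → Submodule ℝ B)
    (hdim : ∀ n, Module.finrank ℝ (Θ n) ≤ K n)
    (hK : ∃ γ ∈ Set.Ioo (0 : ℝ) 1, ∃ a b : ℝ, 0 < a ∧ 0 < b ∧
      ∀ n : ℕ, 1 ≤ n → a * (n : ℝ) ^ γ ≤ (K n : ℝ) ∧ (K n : ℝ) ≤ b * (n : ℝ) ^ γ)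
    (βtil : ℕ → B) (hβtilmem : ∀ n, βtil n ∈ Θ n)
    (hβtilmin : ∀ n, ∀ β ∈ Θ n, ‖ιL (βtil n) - ιL β₀‖ ≤ ‖ιL β - ιL β₀‖)
    (hβtilconv : Tendsto (fun n => ‖ιL (βtil n) - ιL β₀‖) atTop (𝓝 0))
    -- (A5)
    (C : ℝ) (hXbdd : P {ω | ‖X ω‖ ≤ C} = 1)
    (c₂ : ℝ) (hc₂ : c₂ ∈ Set.Ico (0 : ℝ) 1)
    (hnondeg : ∀ β : B, β ≠ 0 → P {ω | ⟪X ω, ιL β⟫ = 0} ≤ ENNReal.ofReal c₂)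
    -- the tuning parameter
    (κ₀ : ℝ) (hκ₀ : 0 < κ₀) :
    ∃ δ > (0 : ℝ), ∃ η > (0 : ℝ), ∃ L > (0 : ℝ), ∃ n₀ : ℕ, ∀ n ≥ n₀,
      ∀ β : B, ∀ κ : ℝ, ‖ιC (β - β₀)‖ < δ → |κ - κ₀| < δ →
        Mpop P H X (ιL β₀) (ιL β) κ - Mpop P H X (ιL β₀) (ιL (βtil n)) κ ≥
          η * (predErr P X (ιL β) (ιL (βtil n))) ^ 2
            - L * ‖ιL (βtil n) - ιL β₀‖ * predErr P X (ιL β) (ιL (βtil n)) := by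
  classical
  have hc₀pos : 0 < c₀ := lt_of_lt_of_le (hHderivpos 0) (hc₀ 0)
  have hC0 : 0 ≤ C := by
    by_contra hC
    push_neg at hC
    have hempty : {ω | ‖X ω‖ ≤ C} = (∅ : Set Ω) := by
      ext ω
      simp only [Set.mem_setOf_eq, Set.mem_empty_iff_false, iff_false]
      intro h
      linarith [norm_nonneg (X ω)]
    rw [hempty] at hXbdd
    simp at hXbdd
  have hmsX : MeasurableSet {ω | ‖X ω‖ ≤ C} := measurableSet_le hX.norm measurable_const
  have haeX : ∀ᵐ ω ∂P, ‖X ω‖ ≤ C := by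
    have h0 : P {ω | ‖X ω‖ ≤ C}ᶜ = 0 := (prob_compl_eq_zero_iff hmsX).2 hXbdd
    rw [ae_iff]
    convert h0 using 2
    ext ω; simp
  -- the L² norm is dominated by the sup norm
  haveI hfin : IsFiniteMeasure (volume.restrict (Set.Icc (0:ℝ) 1)) := by
    constructor
    rw [Measure.restrict_apply_univ, Real.volume_Icc]
    norm_num
  have hLC : ∀ g : B, ‖ιL g‖ ≤ ‖ιC g‖ := by
    intro g
    have hb : ∀ᵐ t ∂(volume.restrict (Set.Icc (0:ℝ) 1)), ‖(ιL g : ℝ → ℝ) t‖ ≤ ‖ιC g‖ := by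
      filter_upwards [hιL g, ae_restrict_mem measurableSet_Icc] with t h1 h2
      rw [h1 h2]
      exact (ιC g).norm_coe_le_norm ⟨t, h2⟩
    have hnorm := MeasureTheory.Lp.norm_le_of_ae_bound (f := ιL g) (norm_nonneg (ιC g)) hb
    have huniv : measureUnivNNReal (volume.restrict (Set.Icc (0:ℝ) 1)) = 1 := by
      simp only [measureUnivNNReal, Measure.restrict_apply_univ, Real.volume_Icc]
      norm_num
    rw [huniv] at hnorm
    simpa using hnorm
  -- n₀ : approximation error at most 1
  have hev : ∀ᶠ n in atTop, ‖ιL (βtil n) - ιL β₀‖ < 1 :=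
    hβtilconv.eventually (Filter.Tendsto.eventually_lt_const one_pos tendsto_id)
  obtain ⟨n₀, hn₀⟩ := Filter.eventually_atTop.1 hev
  -- uniform radius for the linear predictor
  set R := C * (‖ιL β₀‖ + 1) with hRdef
  have hR0 : 0 ≤ R := mul_nonneg hC0 (by positivity)
  have hRR : -R ≤ R := by linarith
  -- minimum of H' on [-R, R]
  obtain ⟨x₀, hx₀mem, hx₀min'⟩ := isCompact_Icc.exists_isMinOn (Set.nonempty_Icc.2 hRR)
    ((hHsmooth.continuous_deriv le_rfl).continuousOn)
  have hx₀min : ∀ y ∈ Set.Icc (-R) R, deriv H x₀ ≤ deriv H y := fun y hy => hx₀min' hy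
  set mH := deriv H x₀ with hmHdef
  have hmHpos : 0 < mH := hHderivpos x₀
  -- range facts
  have hH01 : ∀ x : ℝ, H x ∈ Set.Ioo (0:ℝ) 1 := by
    intro x
    have hx : H x ∈ Set.range H := Set.mem_range_self x
    rwa [hHrange] at hx
  set aH := H (-R) with haHdef
  set bH := H R with hbHdef
  have haH : 0 < aH := (hH01 (-R)).1
  have haH1 : aH < 1 := (hH01 (-R)).2
  have hbH : bH < 1 := (hH01 R).2
  have haHbH : aH ≤ bH := hHmono.monotone hRR
  set a' := min aH (1 - bH) with ha'def
  have ha'pos : 0 < a' := lt_min haH (by linarith)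
  set E := 2 * κ₀ with hEdef
  have hE0 : 0 ≤ E := by positivity
  set mg := 2 * a' ^ E with hmgdef
  set Mg := 2 * a' ^ (-1:ℝ) with hMgdef
  have hmgpos : 0 < mg := mul_pos two_pos (Real.rpow_pos_of_pos ha'pos E)
  have hMgpos : 0 < Mg := mul_pos two_pos (Real.rpow_pos_of_pos ha'pos _)
  -- global Lipschitz bound for H
  have hHLip : ∀ x y : ℝ, |H x - H y| ≤ c₀ * |x - y| := by
    have hdiff : Differentiable ℝ H := hHsmooth.differentiable one_ne_zero
    have hlip : LipschitzWith (Real.toNNReal c₀) H := by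
      apply lipschitzWith_of_nnnorm_deriv_le hdiff
      intro x
      rw [← NNReal.coe_le_coe, coe_nnnorm, Real.norm_eq_abs, Real.coe_toNNReal _ hc₀pos.le,
        abs_of_pos (hHderivpos x)]
      exact hc₀ x
    intro x y
    have h := hlip.dist_le_mul x y
    rwa [Real.dist_eq, Real.dist_eq, Real.coe_toNNReal _ hc₀pos.le] at h
  -- MVT lower bound for H on [-R, R]
  have hHL : ∀ x y : ℝ, x ∈ Set.Icc (-R) R → y ∈ Set.Icc (-R) R →
      mH * |x - y| ≤ |H x - H y| := by
    have key : ∀ x y : ℝ, x < y → x ∈ Set.Icc (-R) R → y ∈ Set.Icc (-R) R →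
        mH * (y - x) ≤ H y - H x := by
      intro x y hxy hx hy
      obtain ⟨c, hc, hder⟩ := exists_deriv_eq_slope H hxy hHsmooth.continuous.continuousOn
        (hHsmooth.differentiable one_ne_zero).differentiableOn
      have hcI : c ∈ Set.Icc (-R) R := ⟨le_trans hx.1 hc.1.le, le_trans hc.2.le hy.2⟩
      have h1 : mH ≤ deriv H c := hx₀min c hcI
      rw [hder] at h1
      have hyx : (0:ℝ) < y - x := by linarith
      have h2 := (le_div_iff₀ hyx).1 h1
      linarith
    intro x y hx hy
    rcases lt_trichotomy x y with h | h | h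
    · have hk := key x y h hx hy
      rw [abs_sub_comm x y, abs_of_nonneg (by linarith : (0:ℝ) ≤ y - x),
        abs_sub_comm (H x) (H y), abs_of_nonneg (by linarith [hHmono h] : (0:ℝ) ≤ H y - H x)]
      linarith
    · simp [h]
    · have hk := key y x h hy hx
      rw [abs_of_nonneg (by linarith : (0:ℝ) ≤ x - y),
        abs_of_nonneg (by linarith [hHmono h] : (0:ℝ) ≤ H x - H y)]
      linarith
  -- measurability of the linear predictor
  have hinner : ∀ g : L2, Measurable (fun ω => (⟪X ω, g⟫ : ℝ)) := by
    intro g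
    have hc : Continuous fun y : L2 => (⟪y, g⟫ : ℝ) :=
      Continuous.inner continuous_id continuous_const
    exact hc.measurable.comp hX
  have hrpc : ∀ c : ℝ, 0 ≤ c → Continuous fun x : ℝ => x ^ c := fun c hc =>
    continuous_iff_continuousAt.2 (fun x => Real.continuousAt_rpow_const x c (Or.inr hc))
  -- now the chosen constants
  set δv := min (1:ℝ) (κ₀/2) with hδdef
  have hδpos : 0 < δv := lt_min one_pos (by positivity)
  set ηv := (mg/2) * mH^2 with hηdef
  have hηpos : 0 < ηv := mul_pos (by linarith) (pow_pos hmHpos 2)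
  set L₂ := (1 + 2*κ₀) * Mg * c₀^2 with hL₂def
  have hL₂pos : 0 < L₂ := by
    apply mul_pos (mul_pos (by linarith) hMgpos) (pow_pos hc₀pos 2)
  set Lv := L₂ * C + 1 with hLdef
  have hLpos : 0 < Lv := by nlinarith
  refine ⟨δv, hδpos, ηv, hηpos, Lv, hLpos, n₀, ?_⟩
  intro n hn β κ hβδ hκδ
  -- bounds on κ
  have hδ1 : δv ≤ 1 := min_le_left _ _
  have hδκ : δv ≤ κ₀/2 := min_le_right _ _
  have habsκ := abs_lt.1 hκδ
  have hκlow : κ₀/2 < κ := by linarith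
  have hκpos : 0 < κ := by linarith
  have hκup : κ < 3*κ₀/2 := by linarith
  -- norm bounds
  have hen : ‖ιL (βtil n) - ιL β₀‖ < 1 := hn₀ n hn
  have heN0 : 0 ≤ ‖ιL (βtil n) - ιL β₀‖ := norm_nonneg _
  have hβ1 : ‖ιL β - ιL β₀‖ < 1 := by
    have h1 := hLC (β - β₀)
    rw [map_sub] at h1
    linarith
  -- the relevant functions
  set u₀ : Ω → ℝ := fun ω => ⟪X ω, ιL β₀⟫ with hu₀def
  set u₁ : Ω → ℝ := fun ω => ⟪X ω, ιL β⟫ with hu₁def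
  set u₂ : Ω → ℝ := fun ω => ⟪X ω, ιL (βtil n)⟫ with hu₂def
  set u : Ω → ℝ := fun ω => ⟪X ω, ιL β - ιL (βtil n)⟫ with hudef
  set v : Ω → ℝ := fun ω => ⟪X ω, ιL (βtil n) - ιL β₀⟫ with hvdef
  have huu : ∀ ω, u ω = u₁ ω - u₂ ω := fun ω => inner_sub_right _ _ _
  have hvv : ∀ ω, v ω = u₂ ω - u₀ ω := fun ω => inner_sub_right _ _ _
  set F₁ : Ω → ℝ := fun ω => dpd κ (H (u₀ ω)) (H (u₁ ω)) with hF₁def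
  set F₂ : Ω → ℝ := fun ω => dpd κ (H (u₀ ω)) (H (u₂ ω)) with hF₂def
  -- measurability
  have hmeasd : ∀ g₂ : L2, Measurable (fun ω => dpd κ (H (⟪X ω, ιL β₀⟫ : ℝ)) (H (⟪X ω, g₂⟫ : ℝ))) := by
    intro g₂
    have h1 : Measurable fun ω => H (⟪X ω, ιL β₀⟫ : ℝ) := hHsmooth.continuous.measurable.comp (hinner (ιL β₀))
    have h2 : Measurable fun ω => H (⟪X ω, g₂⟫ : ℝ) := hHsmooth.continuous.measurable.comp (hinner g₂)
    have hfun : (fun ω => dpd κ (H (⟪X ω, ιL β₀⟫ : ℝ)) (H (⟪X ω, g₂⟫ : ℝ))) = fun ω =>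
        ((H (⟪X ω, g₂⟫ : ℝ)) ^ (1+κ) - (1+1/κ) * (H (⟪X ω, ιL β₀⟫ : ℝ)) * (H (⟪X ω, g₂⟫ : ℝ))^κ
          + (1/κ) * (H (⟪X ω, ιL β₀⟫ : ℝ))^(1+κ))
        + ((1 - H (⟪X ω, g₂⟫ : ℝ)) ^ (1+κ)
          - (1+1/κ) * (1 - H (⟪X ω, ιL β₀⟫ : ℝ)) * (1 - H (⟪X ω, g₂⟫ : ℝ))^κ
          + (1/κ) * (1 - H (⟪X ω, ιL β₀⟫ : ℝ))^(1+κ)) := by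
      funext ω
      exact dpd_eq κ _ _
    rw [hfun]
    have hκ1 : (0:ℝ) ≤ 1 + κ := by linarith
    have mA2 : Measurable fun ω => (H (⟪X ω, g₂⟫ : ℝ)) ^ (1+κ) := (hrpc _ hκ1).measurable.comp h2
    have mB2 : Measurable fun ω => (H (⟪X ω, g₂⟫ : ℝ)) ^ κ := (hrpc _ hκpos.le).measurable.comp h2
    have mA1 : Measurable fun ω => (H (⟪X ω, ιL β₀⟫ : ℝ)) ^ (1+κ) := (hrpc _ hκ1).measurable.comp h1
    have mA2' : Measurable fun ω => (1 - H (⟪X ω, g₂⟫ : ℝ)) ^ (1+κ) :=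
      (hrpc _ hκ1).measurable.comp (measurable_const.sub h2)
    have mB2' : Measurable fun ω => (1 - H (⟪X ω, g₂⟫ : ℝ)) ^ κ :=
      (hrpc _ hκpos.le).measurable.comp (measurable_const.sub h2)
    have mA1' : Measurable fun ω => (1 - H (⟪X ω, ιL β₀⟫ : ℝ)) ^ (1+κ) :=
      (hrpc _ hκ1).measurable.comp (measurable_const.sub h1)
    exact ((mA2.sub ((measurable_const.mul h1).mul mB2)).add (measurable_const.mul mA1)).add
      ((mA2'.sub ((measurable_const.mul (measurable_const.sub h1)).mul mB2')).add
        (measurable_const.mul mA1'))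
  -- integrability of the criterion integrands
  have hFbound : ∀ (ω : Ω) (g : L2), |dpd κ (H (⟪X ω, ιL β₀⟫ : ℝ)) (H (⟪X ω, g⟫ : ℝ))| ≤ 4 + 8/κ₀ := by
    intro ω g
    have h1 := hH01 (⟪X ω, ιL β₀⟫ : ℝ)
    have h2 := hH01 (⟪X ω, g⟫ : ℝ)
    have hd := dpd_abs_le hκpos ⟨h1.1.le, h1.2.le⟩ ⟨h2.1.le, h2.2.le⟩
    have h4 : 4/κ ≤ 8/κ₀ := by
      rw [div_le_div_iff₀ hκpos hκ₀]
      nlinarith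
    linarith
  have hF₁int : Integrable F₁ P := by
    apply (integrable_const (4 + 8/κ₀)).mono' (hmeasd (ιL β)).aestronglyMeasurable
    exact Filter.Eventually.of_forall fun ω => by
      rw [Real.norm_eq_abs]; exact hFbound ω (ιL β)
  have hF₂int : Integrable F₂ P := by
    apply (integrable_const (4 + 8/κ₀)).mono' (hmeasd (ιL (βtil n))).aestronglyMeasurable
    exact Filter.Eventually.of_forall fun ω => by
      rw [Real.norm_eq_abs]; exact hFbound ω (ιL (βtil n))
  -- integrability of u, u², |v u|
  have hub : ∀ᵐ ω ∂P, |u ω| ≤ C * ‖ιL β - ιL (βtil n)‖ := by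
    filter_upwards [haeX] with ω hω
    calc |u ω| ≤ ‖X ω‖ * ‖ιL β - ιL (βtil n)‖ := abs_real_inner_le_norm _ _
      _ ≤ C * ‖ιL β - ιL (βtil n)‖ := mul_le_mul_of_nonneg_right hω (norm_nonneg _)
  have hvb : ∀ᵐ ω ∂P, |v ω| ≤ C * ‖ιL (βtil n) - ιL β₀‖ := by
    filter_upwards [haeX] with ω hω
    calc |v ω| ≤ ‖X ω‖ * ‖ιL (βtil n) - ιL β₀‖ := abs_real_inner_le_norm _ _
      _ ≤ C * ‖ιL (βtil n) - ιL β₀‖ := mul_le_mul_of_nonneg_right hω (norm_nonneg _)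
  have huint : Integrable u P := by
    apply (integrable_const (C * ‖ιL β - ιL (βtil n)‖)).mono' (hinner _).aestronglyMeasurable
    filter_upwards [hub] with ω h
    rwa [Real.norm_eq_abs]
  have hu2int : Integrable (fun ω => (u ω)^2) P := by
    apply (integrable_const ((C * ‖ιL β - ιL (βtil n)‖)^2)).mono'
      ((hinner _).pow_const 2).aestronglyMeasurable
    filter_upwards [hub] with ω h
    rw [Real.norm_eq_abs, abs_of_nonneg (sq_nonneg _), ← sq_abs]
    exact pow_le_pow_left₀ (abs_nonneg _) h 2
  have hvuint : Integrable (fun ω => |v ω * u ω|) P := by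
    apply (integrable_const ((C * ‖ιL (βtil n) - ιL β₀‖) * (C * ‖ιL β - ιL (βtil n)‖))).mono'
      ((hinner _).mul (hinner _)).abs.aestronglyMeasurable
    filter_upwards [hub, hvb] with ω h1 h2
    rw [Real.norm_eq_abs, abs_abs, Pi.mul_apply, abs_mul]
    exact mul_le_mul h2 h1 (abs_nonneg _) (mul_nonneg hC0 (norm_nonneg _))
  -- the pointwise key inequality, a.e.
  have haekey : ∀ᵐ ω ∂P, ηv * (u ω)^2 - L₂ * |v ω * u ω| ≤ F₁ ω - F₂ ω := by
    filter_upwards [haeX] with ω hω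
    -- bounds on the predictors
    have hnβ₀ : C * ‖ιL β₀‖ ≤ R := by
      rw [hRdef]; nlinarith
    have hb0 : |u₀ ω| ≤ R := by
      calc |u₀ ω| ≤ ‖X ω‖ * ‖ιL β₀‖ := abs_real_inner_le_norm _ _
        _ ≤ C * ‖ιL β₀‖ := mul_le_mul_of_nonneg_right hω (norm_nonneg _)
        _ ≤ R := hnβ₀
    have hb1 : |u₁ ω| ≤ R := by
      have hn1 : ‖ιL β‖ ≤ ‖ιL β₀‖ + 1 := by
        have := norm_sub_norm_le (ιL β) (ιL β₀)
        linarith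
      calc |u₁ ω| ≤ ‖X ω‖ * ‖ιL β‖ := abs_real_inner_le_norm _ _
        _ ≤ C * ‖ιL β‖ := mul_le_mul_of_nonneg_right hω (norm_nonneg _)
        _ ≤ C * (‖ιL β₀‖ + 1) := mul_le_mul_of_nonneg_left hn1 hC0
        _ = R := by rw [hRdef]
    have hb2 : |u₂ ω| ≤ R := by
      have hn2 : ‖ιL (βtil n)‖ ≤ ‖ιL β₀‖ + 1 := by
        have := norm_sub_norm_le (ιL (βtil n)) (ιL β₀)
        linarith
      calc |u₂ ω| ≤ ‖X ω‖ * ‖ιL (βtil n)‖ := abs_real_inner_le_norm _ _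
        _ ≤ C * ‖ιL (βtil n)‖ := mul_le_mul_of_nonneg_right hω (norm_nonneg _)
        _ ≤ C * (‖ιL β₀‖ + 1) := mul_le_mul_of_nonneg_left hn2 hC0
        _ = R := by rw [hRdef]
    have hmemI : ∀ w : ℝ, |w| ≤ R → H w ∈ Set.Icc aH bH := by
      intro w hw
      exact ⟨hHmono.monotone (neg_le_of_abs_le hw), hHmono.monotone (le_of_abs_le hw)⟩
    have hp₀ := hmemI _ hb0
    have hp₁ := hmemI _ hb1
    have hp₂ := hmemI _ hb2
    -- bounds on the weight function g
    have hgb : ∀ q ∈ Set.Icc aH bH, mg ≤ q^(κ-1) + (1-q)^(κ-1) ∧ q^(κ-1) + (1-q)^(κ-1) ≤ Mg := by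
      intro q hq
      have hq1 : a' ≤ q := le_trans (min_le_left _ _) hq.1
      have hq2 : q ≤ 1 := le_trans hq.2 hbH.le
      have hq3 : a' ≤ 1 - q := le_trans (min_le_right _ _) (by linarith [hq.2])
      have hq4 : 1 - q ≤ 1 := by linarith [lt_of_lt_of_le haH hq.1]
      have he1 : (-1:ℝ) ≤ κ - 1 := by linarith
      have he2 : κ - 1 ≤ E := by rw [hEdef]; linarith
      obtain ⟨l1, r1⟩ := rpow_bddd ha'pos hq1 hq2 he1 he2 hE0
      obtain ⟨l2, r2⟩ := rpow_bddd ha'pos hq3 hq4 he1 he2 hE0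
      constructor
      · rw [hmgdef]; linarith
      · rw [hMgdef]; linarith
    have hkey := dpd_key hκpos haH hbH hp₀ hp₁ hp₂ hmgpos.le hgb
    -- quadratic term
    have hMVT := hHL (u₁ ω) (u₂ ω) (abs_le.1 hb1) (abs_le.1 hb2)
    have hsq : mH^2 * (u ω)^2 ≤ (H (u₁ ω) - H (u₂ ω))^2 := by
      have hpow : (mH * |u₁ ω - u₂ ω|)^2 ≤ |H (u₁ ω) - H (u₂ ω)|^2 :=
        pow_le_pow_left₀ (by positivity) hMVT 2
      rw [huu ω]
      calc mH^2 * (u₁ ω - u₂ ω)^2 = (mH * |u₁ ω - u₂ ω|)^2 := by rw [mul_pow, sq_abs]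
        _ ≤ |H (u₁ ω) - H (u₂ ω)|^2 := hpow
        _ = (H (u₁ ω) - H (u₂ ω))^2 := sq_abs _
    -- mixed term
    have hmix : (1+κ) * Mg * (|H (u₂ ω) - H (u₀ ω)| * |H (u₁ ω) - H (u₂ ω)|)
        ≤ L₂ * (|v ω| * |u ω|) := by
      have h1 : |H (u₂ ω) - H (u₀ ω)| ≤ c₀ * |v ω| := by
        rw [hvv ω]; exact hHLip _ _
      have h2 : |H (u₁ ω) - H (u₂ ω)| ≤ c₀ * |u ω| := by
        rw [huu ω]; exact hHLip _ _
      have h3 : |H (u₂ ω) - H (u₀ ω)| * |H (u₁ ω) - H (u₂ ω)| ≤ (c₀ * |v ω|) * (c₀ * |u ω|) :=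
        mul_le_mul h1 h2 (abs_nonneg _) (by positivity)
      have h4 : (1+κ) * Mg ≤ (1 + 2*κ₀) * Mg :=
        mul_le_mul_of_nonneg_right (by linarith) hMgpos.le
      calc (1+κ) * Mg * (|H (u₂ ω) - H (u₀ ω)| * |H (u₁ ω) - H (u₂ ω)|)
          ≤ (1+κ) * Mg * ((c₀ * |v ω|) * (c₀ * |u ω|)) := by
            apply mul_le_mul_of_nonneg_left h3
            positivity
        _ ≤ (1 + 2*κ₀) * Mg * ((c₀ * |v ω|) * (c₀ * |u ω|)) := by
            apply mul_le_mul_of_nonneg_right h4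
            positivity
        _ = L₂ * (|v ω| * |u ω|) := by rw [hL₂def]; ring
    have hq2' : (mg/2) * (mH^2 * (u ω)^2) ≤ mg/2 * (H (u₁ ω) - H (u₂ ω))^2 :=
      mul_le_mul_of_nonneg_left hsq (by linarith)
    have hηeq : ηv * (u ω)^2 = (mg/2) * (mH^2 * (u ω)^2) := by rw [hηdef]; ring
    rw [abs_mul, hηeq]
    linarith
  -- assembling the integrals
  have hWint : Integrable (fun ω => ηv * (u ω)^2 - L₂ * |v ω * u ω|) P :=
    (hu2int.const_mul ηv).sub (hvuint.const_mul L₂)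
  have hMdiff : Mpop P H X (ιL β₀) (ιL β) κ - Mpop P H X (ιL β₀) (ιL (βtil n)) κ
      = ∫ ω, (F₁ ω - F₂ ω) ∂P := (integral_sub hF₁int hF₂int).symm
  have step1 : ∫ ω, (ηv * (u ω)^2 - L₂ * |v ω * u ω|) ∂P ≤ ∫ ω, (F₁ ω - F₂ ω) ∂P :=
    integral_mono_ae hWint (hF₁int.sub hF₂int) haekey
  have hWsplit : ∫ ω, (ηv * (u ω)^2 - L₂ * |v ω * u ω|) ∂P
      = ηv * (∫ ω, (u ω)^2 ∂P) - L₂ * ∫ ω, |v ω * u ω| ∂P := by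
    rw [integral_sub (hu2int.const_mul ηv) (hvuint.const_mul L₂),
      integral_const_mul, integral_const_mul]
  set S := Real.sqrt (∫ ω, (u ω)^2 ∂P) with hSdef
  have hS0 : 0 ≤ S := Real.sqrt_nonneg _
  have hvu : ∫ ω, |v ω * u ω| ∂P ≤ (C * ‖ιL (βtil n) - ιL β₀‖) * S := by
    have h1 : ∫ ω, |v ω * u ω| ∂P ≤ ∫ ω, (C * ‖ιL (βtil n) - ιL β₀‖) * |u ω| ∂P := by
      apply integral_mono_ae hvuint ((huint.abs).const_mul _)
      filter_upwards [hvb] with ω h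
      rw [abs_mul]
      exact mul_le_mul_of_nonneg_right h (abs_nonneg _)
    have h2 : ∫ ω, (C * ‖ιL (βtil n) - ιL β₀‖) * |u ω| ∂P
        = (C * ‖ιL (βtil n) - ιL β₀‖) * ∫ ω, |u ω| ∂P := integral_const_mul _ _
    have h3 : ∫ ω, |u ω| ∂P ≤ S := int_abs_le_sqrt P huint hu2int
    have h4 : (C * ‖ιL (βtil n) - ιL β₀‖) * (∫ ω, |u ω| ∂P)
        ≤ (C * ‖ιL (βtil n) - ιL β₀‖) * S :=
      mul_le_mul_of_nonneg_left h3 (mul_nonneg hC0 (norm_nonneg _))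
    linarith
  have hπ : predErr P X (ιL β) (ιL (βtil n)) = S := rfl
  have hπ2 : (predErr P X (ιL β) (ιL (βtil n)))^2 = ∫ ω, (u ω)^2 ∂P := by
    rw [hπ, hSdef]
    exact Real.sq_sqrt (integral_nonneg fun ω => sq_nonneg _)
  rw [ge_iff_le, hMdiff, hπ2, hπ]
  have hfin1 : L₂ * ((C * ‖ιL (βtil n) - ιL β₀‖) * S) ≤ Lv * ‖ιL (βtil n) - ιL β₀‖ * S := by
    have hns : 0 ≤ ‖ιL (βtil n) - ιL β₀‖ * S := mul_nonneg heN0 hS0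
    have : L₂ * C ≤ Lv := by rw [hLdef]; linarith
    calc L₂ * ((C * ‖ιL (βtil n) - ιL β₀‖) * S) = (L₂ * C) * (‖ιL (βtil n) - ιL β₀‖ * S) := by ring
      _ ≤ Lv * (‖ιL (βtil n) - ιL β₀‖ * S) := mul_le_mul_of_nonneg_right this hns
      _ = Lv * ‖ιL (βtil n) - ιL β₀‖ * S := by ring
  have hfin2 : L₂ * (∫ ω, |v ω * u ω| ∂P) ≤ L₂ * ((C * ‖ιL (βtil n) - ιL β₀‖) * S) :=
    mul_le_mul_of_nonneg_left hvu hL₂pos.le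
  linarith

end
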